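/- Let β > 0 and α in the open unit simplex, and let ν be a global minimizer of f_{β,α}(ν) = -(β/2)Σᵢνᵢ² + Σᵢ νᵢ log(νᵢ/αᵢ) over the unit simplex. If αᵢ > αⱼ then νᵢ > νⱼ. -/

import Mathlib

open Finset

lemma sum_diff_two {i j : Fin 3} (hij : i ≠ j) (f g : Fin 3 → ℝ)
    (h : ∀ m, m ≠ i → m ≠ j → f m = g m) :
    (∑ m, f m) - ∑ m, g m = (f i - g i) + (f j - g j) := by
  rw [← Finset.sum_sub_distrib]
  refine Finset.sum_eq_add i j hij (fun c _ hc => ?_) (by simp) (by simp)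
  rw [h c hc.1 hc.2]; ring

lemma log_slope_upper (t ε : ℝ) (ht : 0 < t) (htε : 0 < t + ε) :
    t * Real.log (t + ε) - t * Real.log t ≤ ε := by
  have h := Real.log_le_sub_one_of_pos (show (0:ℝ) < (t+ε)/t by positivity)
  rw [Real.log_div (by positivity) (by positivity)] at h
  have he : (t+ε)/t - 1 = ε/t := by field_simp; ring
  rw [he] at h
  calc t * Real.log (t+ε) - t * Real.log t = t * (Real.log (t+ε) - Real.log t) := by ring
    _ ≤ t * (ε/t) := by nlinarith
    _ = ε := by field_simp

set_option maxHeartbeats 2000000 in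
open Finset in
/-- Tilting Lemma: if ν is a global minimizer of the three-state Curie–Weiss
Potts free energy over the unit simplex and αᵢ > αⱼ, then νᵢ > νⱼ. -/
theorem tilting_lemma
    (β : ℝ) (hβ : 0 < β) (α ν : Fin 3 → ℝ)
    (hα : ∀ k, 0 < α k) (hαsum : ∑ k, α k = 1)
    (hν : ∀ k, 0 ≤ ν k) (hνsum : ∑ k, ν k = 1)
    (hmin : ∀ μ : Fin 3 → ℝ, (∀ k, 0 ≤ μ k) → (∑ k, μ k = 1) →
      -(β/2) * ∑ k, (ν k)^2 + ∑ k, ν k * Real.log (ν k / α k)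
        ≤ -(β/2) * ∑ k, (μ k)^2 + ∑ k, μ k * Real.log (μ k / α k))
    (i j : Fin 3) (hij : α j < α i) :
    ν j < ν i := by
  have hδ : 0 < Real.log (α i) - Real.log (α j) := by
    have := Real.log_lt_log (hα j) hij; linarith
  have hne : i ≠ j := by rintro rfl; exact lt_irrefl _ hij
  -- Step 1: ν j ≤ ν i via swapping coordinates i and j
  have step1 : ν j ≤ ν i := by
    set σ := Equiv.swap i j with hσ
    have hμsum : ∑ k, (ν ∘ σ) k = 1 := by
      simp only [Function.comp_apply]
      rw [Equiv.sum_comp σ ν]; exact hνsum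
    have hsq : ∑ k, ((ν ∘ σ) k)^2 = ∑ k, (ν k)^2 := by
      simp only [Function.comp_apply]
      exact Equiv.sum_comp σ (fun k => (ν k)^2)
    have hent : ∑ k, (ν ∘ σ) k * Real.log ((ν ∘ σ) k / α k)
        = ∑ k, ν k * Real.log (ν k / α (σ k)) := by
      apply Fintype.sum_equiv σ
      intro k
      simp [Function.comp, hσ, Equiv.swap_apply_self]
    have h := hmin (ν ∘ σ) (fun k => hν _) hμsum
    rw [hsq, hent] at h
    have h2 : 0 ≤ (∑ k, ν k * Real.log (ν k / α (σ k))) -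
        ∑ k, ν k * Real.log (ν k / α k) := by linarith
    have key : ∀ (x a b : ℝ), 0 ≤ x → 0 < a → 0 < b →
        x * Real.log (x / a) - x * Real.log (x / b) = x * (Real.log b - Real.log a) := by
      intro x a b hx ha hb
      rcases eq_or_lt_of_le hx with h0 | h0
      · simp [← h0]
      · rw [Real.log_div (ne_of_gt h0) (ne_of_gt ha),
          Real.log_div (ne_of_gt h0) (ne_of_gt hb)]; ring
    rw [sum_diff_two hne _ _ (fun m hmi hmj => by
      rw [hσ, Equiv.swap_apply_of_ne_of_ne hmi hmj])] at h2
    have hi : σ i = j := Equiv.swap_apply_left i j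
    have hj : σ j = i := Equiv.swap_apply_right i j
    rw [hi, hj, key (ν i) (α j) (α i) (hν i) (hα j) (hα i),
      key (ν j) (α i) (α j) (hν j) (hα i) (hα j)] at h2
    by_contra hc
    push_neg at hc
    nlinarith [mul_pos (sub_pos.mpr hc) hδ]
  -- Step 2: rule out equality
  by_contra hcon
  push_neg at hcon
  have heq : ν i = ν j := le_antisymm hcon step1
  rcases eq_or_lt_of_le (hν j) with h0 | h0
  · -- Case ν i = ν j = 0 : move mass ε from the third coordinate k to i
    have hνj0 : ν j = 0 := h0.symm
    have hνi0 : ν i = 0 := by rw [heq, hνj0]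
    have hex : ∀ i j : Fin 3, i ≠ j →
        ∃ k, k ≠ i ∧ k ≠ j ∧ ∀ m : Fin 3, m ≠ i → m ≠ j → m = k := by decide
    obtain ⟨k, hki, hkj, hkuniq⟩ := hex i j hne
    have hνk : ν k = 1 := by
      have hs : ∑ m, ν m = ν k := by
        refine Finset.sum_eq_single k (fun b _ hb => ?_) (by simp)
        by_cases hbi : b = i
        · rw [hbi, hνi0]
        · by_cases hbj : b = j
          · rw [hbj, hνj0]
          · exact absurd (hkuniq b hbi hbj) hb
      rw [← hs]; exact hνsum
    obtain ⟨ε, hε0, hεhalf, hlogε⟩ : ∃ ε : ℝ, 0 < ε ∧ ε ≤ 1/2 ∧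
        Real.log ε ≤ -(β + (Real.log (α k) - Real.log (α i)) + 1) := by
      refine ⟨min (1/2 : ℝ)
        (Real.exp (-(β + (Real.log (α k) - Real.log (α i)) + 1))),
        lt_min (by norm_num) (Real.exp_pos _), min_le_left _ _, ?_⟩
      have h1 : (0:ℝ) < min (1/2 : ℝ)
          (Real.exp (-(β + (Real.log (α k) - Real.log (α i)) + 1))) :=
        lt_min (by norm_num) (Real.exp_pos _)
      have := (Real.log_le_log_iff h1 (Real.exp_pos _)).mpr (min_le_right _ _)
      rwa [Real.log_exp] at this
    set μ : Fin 3 → ℝ :=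
      fun m => ν m + (if m = i then ε else 0) - (if m = k then ε else 0) with hμdef
    have hik : i ≠ k := Ne.symm hki
    have hμi : μ i = ε := by simp [hμdef, hνi0, hik]
    have hμk : μ k = 1 - ε := by simp [hμdef, hνk, hki]
    have hμoth : ∀ m, m ≠ i → m ≠ k → μ m = ν m := fun m h1 h2 => by
      simp [hμdef, h1, h2]
    have hμ0 : ∀ m, 0 ≤ μ m := by
      intro m
      by_cases h1 : m = i
      · rw [h1, hμi]; exact hε0.le
      · by_cases h2 : m = k
        · rw [h2, hμk]; linarith
        · rw [hμoth m h1 h2]; exact hν m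
    have hμsum : ∑ m, μ m = 1 := by
      simp only [hμdef]
      rw [Finset.sum_sub_distrib, Finset.sum_add_distrib]
      simp [hνsum]
    clear hμdef
    clear_value μ
    have h := hmin μ hμ0 hμsum
    have h2 : (β/2) * ((∑ m, (μ m)^2) - ∑ m, (ν m)^2)
        ≤ (∑ m, μ m * Real.log (μ m / α m)) - ∑ m, ν m * Real.log (ν m / α m) := by
      linarith
    have hsq : (∑ m, (μ m)^2) - ∑ m, (ν m)^2 = 2*ε^2 - 2*ε := by
      rw [sum_diff_two hik (fun m => (μ m)^2) (fun m => (ν m)^2)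
        (fun m h1 h2 => by show μ m ^ 2 = ν m ^ 2; rw [hμoth m h1 h2])]
      rw [hμi, hμk, hνi0, hνk]; ring
    have hent : (∑ m, μ m * Real.log (μ m / α m)) - ∑ m, ν m * Real.log (ν m / α m)
        = ε * Real.log ε - ε * Real.log (α i)
          + (1-ε) * Real.log (1-ε) + ε * Real.log (α k) := by
      rw [sum_diff_two hik _ _ (fun m h1 h2 => by
        show μ m * Real.log (μ m / α m) = ν m * Real.log (ν m / α m)
        rw [hμoth m h1 h2])]
      rw [hμi, hμk, hνi0, hνk,
        Real.log_div (ne_of_gt hε0) (ne_of_gt (hα i)),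
        Real.log_div (ne_of_gt (by linarith : (0:ℝ) < 1 - ε)) (ne_of_gt (hα k)),
        Real.log_div one_ne_zero (ne_of_gt (hα k)), Real.log_one]
      ring
    rw [hsq, hent] at h2
    have hb1 : (1-ε) * Real.log (1-ε) ≤ 0 := by
      have hl := Real.log_nonpos (by linarith : (0:ℝ) ≤ 1 - ε) (by linarith)
      nlinarith
    have hb2 : ε * Real.log ε
        ≤ ε * (-(β + (Real.log (α k) - Real.log (α i)) + 1)) :=
      mul_le_mul_of_nonneg_left hlogε hε0.le
    linarith [h2, hb1, hb2, hε0, mul_pos hβ (mul_pos hε0 hε0)]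
  · -- Case ν i = ν j = t > 0 : move mass ε from j to i
    set t := ν j with htdef
    obtain ⟨ε, hε0, hε1, hε2⟩ : ∃ ε : ℝ, 0 < ε ∧ ε ≤ t/2 ∧
        ε ≤ t * (Real.log (α i) - Real.log (α j)) / 8 :=
      ⟨min (t/2) (t * (Real.log (α i) - Real.log (α j)) / 8),
        lt_min (by linarith) (by positivity), min_le_left _ _, min_le_right _ _⟩
    have htε : 0 < t - ε := by linarith
    clear_value t
    set μ : Fin 3 → ℝ :=
      fun m => ν m + (if m = i then ε else 0) - (if m = j then ε else 0) with hμdef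
    have hμi : μ i = t + ε := by simp [hμdef, hne, heq]
    have hμj : μ j = t - ε := by simp [hμdef, Ne.symm hne, htdef.symm]
    have hμoth : ∀ m, m ≠ i → m ≠ j → μ m = ν m := fun m h1 h2 => by
      simp [hμdef, h1, h2]
    have hμ0 : ∀ m, 0 ≤ μ m := by
      intro m
      by_cases h1 : m = i
      · rw [h1, hμi]; linarith
      · by_cases h2 : m = j
        · rw [h2, hμj]; linarith
        · rw [hμoth m h1 h2]; exact hν m
    have hμsum : ∑ m, μ m = 1 := by
      simp only [hμdef]
      rw [Finset.sum_sub_distrib, Finset.sum_add_distrib]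
      simp [hνsum]
    clear hμdef
    clear_value μ
    have h := hmin μ hμ0 hμsum
    have h2 : (β/2) * ((∑ m, (μ m)^2) - ∑ m, (ν m)^2)
        ≤ (∑ m, μ m * Real.log (μ m / α m)) - ∑ m, ν m * Real.log (ν m / α m) := by
      linarith
    have hsq : (∑ m, (μ m)^2) - ∑ m, (ν m)^2 = 2*ε^2 := by
      rw [sum_diff_two hne (fun m => (μ m)^2) (fun m => (ν m)^2)
        (fun m h1 h2 => by show μ m ^ 2 = ν m ^ 2; rw [hμoth m h1 h2])]
      rw [hμi, hμj, heq, ← htdef]; ring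
    have hent : (∑ m, μ m * Real.log (μ m / α m)) - ∑ m, ν m * Real.log (ν m / α m)
        = (t+ε) * Real.log (t+ε) + (t-ε) * Real.log (t-ε) - 2*t*Real.log t
          - ε * Real.log (α i) + ε * Real.log (α j) := by
      rw [sum_diff_two hne _ _ (fun m h1 h2 => by
        show μ m * Real.log (μ m / α m) = ν m * Real.log (ν m / α m)
        rw [hμoth m h1 h2])]
      rw [hμi, hμj, heq, ← htdef,
        Real.log_div (by positivity : t + ε ≠ 0) (ne_of_gt (hα i)),
        Real.log_div (ne_of_gt htε) (ne_of_gt (hα j)),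
        Real.log_div (ne_of_gt h0) (ne_of_gt (hα i)),
        Real.log_div (ne_of_gt h0) (ne_of_gt (hα j))]
      ring
    rw [hsq, hent] at h2
    have hb1 : t * Real.log (t + ε) - t * Real.log t ≤ ε :=
      log_slope_upper t ε h0 (by linarith)
    have hb2 : t * Real.log (t - ε) - t * Real.log t ≤ -ε := by
      have h := Real.log_le_sub_one_of_pos (show (0:ℝ) < (t-ε)/t by positivity)
      rw [Real.log_div (ne_of_gt htε) (ne_of_gt h0)] at h
      have he : (t-ε)/t - 1 = -ε/t := by field_simp; ring
      rw [he] at h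
      calc t * Real.log (t-ε) - t * Real.log t
          = t * (Real.log (t-ε) - Real.log t) := by ring
        _ ≤ t * (-ε/t) := by nlinarith
        _ = -ε := by field_simp
    have hL : Real.log (t+ε) - Real.log (t-ε)
        ≤ (Real.log (α i) - Real.log (α j)) / 2 := by
      have h := Real.log_le_sub_one_of_pos (show (0:ℝ) < (t+ε)/(t-ε) by positivity)
      rw [Real.log_div (by positivity : t + ε ≠ 0) (ne_of_gt htε)] at h
      have he : (t+ε)/(t-ε) - 1 ≤ (Real.log (α i) - Real.log (α j)) / 2 := by
        rw [div_sub_one (ne_of_gt htε), div_le_iff₀ htε]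
        nlinarith [mul_le_mul_of_nonneg_left hε1 hδ.le, hε2, hδ, h0, hε0]
      linarith
    have hLε : ε * (Real.log (t+ε) - Real.log (t-ε))
        ≤ ε * ((Real.log (α i) - Real.log (α j)) / 2) :=
      mul_le_mul_of_nonneg_left hL hε0.le
    linarith [h2, hb1, hb2, hLε, mul_pos hε0 hδ, mul_pos hβ (mul_pos hε0 hε0)]
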